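/- For each fixed j ∈ ℤ with j < 0, the system {T^t_{(k,l)} N_j : k, l ∈ ℤ} with N_j(x,y) := 2^j φ₁(2^j x, 2^j y) is a Riesz sequence in L²(ℝ²) with bounds 1 − 2/π and 1 + 2/π: (1 − 2/π)‖c‖² ≤ ‖Σ_{k,l} c_{k,l} T^t_{(k,l)} N_j‖² ≤ (1 + 2/π)‖c‖² for all finite c ∈ ℓ²(ℤ²). For j ≥ 0 the system is orthonormal. -/

import Mathlib

open MeasureTheory

noncomputable def tT (k l : ℤ) (φ : ℝ × ℝ → ℂ) : ℝ × ℝ → ℂ :=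
  fun p => Complex.exp (Real.pi * Complex.I * ((l : ℂ) * p.1 - (k : ℂ) * p.2)) *
    φ (p.1 - k, p.2 - l)

noncomputable def phi1 : ℝ × ℝ → ℂ :=
  fun p => if p.1 ∈ Set.Ico (0:ℝ) 1 ∧ p.2 ∈ Set.Ico (0:ℝ) 1 then 1 else 0

noncomputable def Nj (j : ℤ) : ℝ × ℝ → ℂ :=
  fun p => (2 : ℂ) ^ j * phi1 ((2 : ℝ) ^ j * p.1, (2 : ℝ) ^ j * p.2)

open Set

noncomputable def NjRgf (j m u v : ℤ) : ℝ → ℂ :=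
  fun x => (((2:ℝ)^j : ℝ) : ℂ) * Complex.exp (Real.pi * Complex.I * m * x) *
    (if x ∈ Set.Ico (max (u:ℝ) (v:ℝ)) (min (u:ℝ) (v:ℝ) + ((2:ℝ)^j)⁻¹) then 1 else 0)

lemma NjR_ite_mul (P Q : Prop) [Decidable P] [Decidable Q] :
    (if P then (1:ℂ) else 0) * (if Q then 1 else 0) = if P ∧ Q then 1 else 0 := by
  by_cases hP : P <;> by_cases hQ : Q <;> simp [hP, hQ]

lemma NjR_tT_eq (j k l : ℤ) (z : ℝ × ℝ) :
    tT k l (Nj j) z = Complex.exp (Real.pi * Complex.I * ((l:ℂ) * z.1 - (k:ℂ) * z.2)) *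
      ((((2:ℝ)^j : ℝ):ℂ) *
      ((if z.1 ∈ Set.Ico (k:ℝ) ((k:ℝ) + ((2:ℝ)^j)⁻¹) then 1 else 0) *
      (if z.2 ∈ Set.Ico (l:ℝ) ((l:ℝ) + ((2:ℝ)^j)⁻¹) then 1 else 0))) := by
  have h2 : (0:ℝ) < (2:ℝ)^j := by positivity
  have hinv : (2:ℝ)^j * ((2:ℝ)^j)⁻¹ = 1 := mul_inv_cancel₀ (ne_of_gt h2)
  have hcond : ∀ (a : ℤ) (x : ℝ),
      ((2:ℝ)^j * (x - a) ∈ Set.Ico (0:ℝ) 1) ↔ x ∈ Set.Ico (a:ℝ) ((a:ℝ) + ((2:ℝ)^j)⁻¹) := by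
    intro a x
    rw [Set.mem_Ico, Set.mem_Ico]
    constructor
    · rintro ⟨h1, h2'⟩
      constructor
      · nlinarith
      · nlinarith
    · rintro ⟨h1, h2'⟩
      constructor
      · nlinarith
      · nlinarith
  show Complex.exp _ * ((2:ℂ)^j * phi1 _) = _
  rw [NjR_ite_mul]
  congr 1
  rw [phi1]
  simp only
  rw [if_congr (and_congr (hcond k z.1) (hcond l z.2)) rfl rfl]
  congr 1
  rw [Complex.ofReal_zpow]
  norm_num

lemma NjR_prod (j k l k' l' : ℤ) (z : ℝ × ℝ) :
    tT k l (Nj j) z * (starRingEnd ℂ) (tT k' l' (Nj j) z)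
      = NjRgf j (l - l') k k' z.1 * NjRgf j (k' - k) l l' z.2 := by
  rw [NjR_tT_eq, NjR_tT_eq]
  simp only [map_mul]
  rw [← Complex.exp_conj]
  have hconjarg : (starRingEnd ℂ) (Real.pi * Complex.I * ((l':ℂ) * z.1 - (k':ℂ) * z.2))
      = - (Real.pi * Complex.I * ((l':ℂ) * z.1 - (k':ℂ) * z.2)) := by
    simp only [map_mul, map_sub, Complex.conj_I, Complex.conj_ofReal, map_intCast]
    push_cast; ring
  rw [hconjarg]
  have hcr : (starRingEnd ℂ) ((((2:ℝ)^j : ℝ):ℂ)) = (((2:ℝ)^j : ℝ):ℂ) := Complex.conj_ofReal _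
  rw [hcr]
  have hite : ∀ (P : Prop) (inst : Decidable P),
      (starRingEnd ℂ) (if P then (1:ℂ) else 0) = (if P then 1 else 0) := by
    intros P inst; split <;> simp
  rw [hite, hite]
  have hexp : Complex.exp (Real.pi * Complex.I * ((l:ℂ) * z.1 - (k:ℂ) * z.2)) *
      Complex.exp (-(Real.pi * Complex.I * ((l':ℂ) * z.1 - (k':ℂ) * z.2)))
      = Complex.exp (Real.pi * Complex.I * ((l - l' : ℤ):ℂ) * z.1) *
        Complex.exp (Real.pi * Complex.I * ((k' - k : ℤ):ℂ) * z.2) := by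
    rw [← Complex.exp_add, ← Complex.exp_add]
    congr 1
    push_cast; ring
  have hIco : ∀ (u v : ℤ) (x : ℝ),
      (if x ∈ Set.Ico (u:ℝ) ((u:ℝ) + ((2:ℝ)^j)⁻¹) then (1:ℂ) else 0) *
      (if x ∈ Set.Ico (v:ℝ) ((v:ℝ) + ((2:ℝ)^j)⁻¹) then 1 else 0)
      = if x ∈ Set.Ico (max (u:ℝ) (v:ℝ)) (min (u:ℝ) (v:ℝ) + ((2:ℝ)^j)⁻¹) then 1 else 0 := by
    intro u v x
    rw [NjR_ite_mul]
    apply if_congr _ rfl rfl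
    rw [← Set.mem_inter_iff, Set.Ico_inter_Ico, min_add_add_right]
  calc (Complex.exp (Real.pi * Complex.I * ((l:ℂ) * z.1 - (k:ℂ) * z.2)) *
          ((((2:ℝ)^j : ℝ):ℂ) *
          ((if z.1 ∈ Set.Ico (k:ℝ) ((k:ℝ) + ((2:ℝ)^j)⁻¹) then (1:ℂ) else 0) *
           (if z.2 ∈ Set.Ico (l:ℝ) ((l:ℝ) + ((2:ℝ)^j)⁻¹) then 1 else 0)))) *
        (Complex.exp (-(Real.pi * Complex.I * ((l':ℂ) * z.1 - (k':ℂ) * z.2))) *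
          ((((2:ℝ)^j : ℝ):ℂ) *
          ((if z.1 ∈ Set.Ico (k':ℝ) ((k':ℝ) + ((2:ℝ)^j)⁻¹) then (1:ℂ) else 0) *
           (if z.2 ∈ Set.Ico (l':ℝ) ((l':ℝ) + ((2:ℝ)^j)⁻¹) then 1 else 0))))
      = (Complex.exp (Real.pi * Complex.I * ((l:ℂ) * z.1 - (k:ℂ) * z.2)) *
          Complex.exp (-(Real.pi * Complex.I * ((l':ℂ) * z.1 - (k':ℂ) * z.2)))) *
        ((((2:ℝ)^j : ℝ):ℂ) * (((2:ℝ)^j : ℝ):ℂ)) *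
        (((if z.1 ∈ Set.Ico (k:ℝ) ((k:ℝ) + ((2:ℝ)^j)⁻¹) then (1:ℂ) else 0) *
          (if z.1 ∈ Set.Ico (k':ℝ) ((k':ℝ) + ((2:ℝ)^j)⁻¹) then 1 else 0)) *
         ((if z.2 ∈ Set.Ico (l:ℝ) ((l:ℝ) + ((2:ℝ)^j)⁻¹) then (1:ℂ) else 0) *
          (if z.2 ∈ Set.Ico (l':ℝ) ((l':ℝ) + ((2:ℝ)^j)⁻¹) then 1 else 0))) := by ring
    _ = (Complex.exp (Real.pi * Complex.I * ((l - l' : ℤ):ℂ) * z.1) *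
          Complex.exp (Real.pi * Complex.I * ((k' - k : ℤ):ℂ) * z.2)) *
        ((((2:ℝ)^j : ℝ):ℂ) * (((2:ℝ)^j : ℝ):ℂ)) *
        ((if z.1 ∈ Set.Ico (max (k:ℝ) (k':ℝ)) (min (k:ℝ) (k':ℝ) + ((2:ℝ)^j)⁻¹) then (1:ℂ) else 0) *
         (if z.2 ∈ Set.Ico (max (l:ℝ) (l':ℝ)) (min (l:ℝ) (l':ℝ) + ((2:ℝ)^j)⁻¹) then 1 else 0)) := by
        rw [hexp, hIco, hIco]
    _ = NjRgf j (l - l') k k' z.1 * NjRgf j (k' - k) l l' z.2 := by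
        simp only [NjRgf]; ring

lemma NjR_gf_int2 (j m u v : ℤ) :
    ∫ x, NjRgf j m u v x = (((2:ℝ)^j : ℝ) : ℂ) *
      ∫ x in Set.Ico (max (u:ℝ) (v:ℝ)) (min (u:ℝ) (v:ℝ) + ((2:ℝ)^j)⁻¹),
        Complex.exp (Real.pi * Complex.I * m * x) := by
  rw [← MeasureTheory.integral_const_mul, ← MeasureTheory.integral_indicator measurableSet_Ico]
  congr 1
  funext x
  simp [NjRgf, Set.indicator_apply]

lemma NjR_gf_integrable (j m u v : ℤ) : Integrable (NjRgf j m u v) := by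
  have : NjRgf j m u v = Set.indicator
      (Set.Ico (max (u:ℝ) (v:ℝ)) (min (u:ℝ) (v:ℝ) + ((2:ℝ)^j)⁻¹))
      (fun x => (((2:ℝ)^j : ℝ) : ℂ) * Complex.exp (Real.pi * Complex.I * m * x)) := by
    funext x
    simp [NjRgf, Set.indicator_apply]
  rw [this, MeasureTheory.integrable_indicator_iff measurableSet_Ico]
  apply MeasureTheory.IntegrableOn.mono_set
    (t := Set.Icc (max (u:ℝ) (v:ℝ)) (min (u:ℝ) (v:ℝ) + ((2:ℝ)^j)⁻¹))
  · apply Continuous.integrableOn_Icc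
    fun_prop
  · exact Set.Ico_subset_Icc_self

lemma NjR_prod_integrable (j m u v m' u' v' : ℤ) :
    Integrable (fun z : ℝ×ℝ => NjRgf j m u v z.1 * NjRgf j m' u' v' z.2) := by
  rw [MeasureTheory.Measure.volume_eq_prod]
  exact (NjR_gf_integrable j m u v).mul_prod (NjR_gf_integrable j m' u' v')

lemma NjR_G_eq (j k l k' l' : ℤ) :
    ∫ z : ℝ × ℝ, tT k l (Nj j) z * (starRingEnd ℂ) (tT k' l' (Nj j) z)
      = (∫ x, NjRgf j (l - l') k k' x) * (∫ y, NjRgf j (k' - k) l l' y) := by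
  have h : (fun z : ℝ×ℝ => tT k l (Nj j) z * (starRingEnd ℂ) (tT k' l' (Nj j) z))
      = fun z : ℝ×ℝ => NjRgf j (l - l') k k' z.1 * NjRgf j (k' - k) l l' z.2 :=
    funext (NjR_prod j k l k' l')
  rw [h, MeasureTheory.Measure.volume_eq_prod, MeasureTheory.integral_prod_mul]

lemma NjR_gf_diag2 (j u : ℤ) : ∫ x, NjRgf j 0 u u x = 1 := by
  rw [NjR_gf_int2]
  have h2 : (0:ℝ) < (2:ℝ)^j := by positivity
  have h0 : ∀ x : ℝ, Complex.exp (Real.pi * Complex.I * ((0:ℤ):ℂ) * x) = 1 := by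
    intro x; simp
  simp only [h0]
  rw [MeasureTheory.setIntegral_const]
  simp only [max_self, min_self, Real.volume_Ico, add_sub_cancel_left,
    ENNReal.toReal_ofReal (le_of_lt (inv_pos.2 h2))]
  rw [Complex.real_smul, mul_one, ← Complex.ofReal_mul,
    Real.volume_real_Ico_of_le (le_add_of_nonneg_right (le_of_lt (inv_pos.2 h2))),
    add_sub_cancel_left, mul_inv_cancel₀ (ne_of_gt h2)]
  simp

lemma NjR_gf_empty2 (j m u v : ℤ)
    (h : min (u:ℝ) (v:ℝ) + ((2:ℝ)^j)⁻¹ ≤ max (u:ℝ) (v:ℝ)) :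
    ∫ x, NjRgf j m u v x = 0 := by
  rw [NjR_gf_int2, Set.Ico_eq_empty (not_lt.2 h)]
  simp

lemma NjR_part2 (j : ℤ) (hj : 0 ≤ j) (k l k' l' : ℤ) :
    (∫ p : ℝ × ℝ, tT k l (Nj j) p * (starRingEnd ℂ) (tT k' l' (Nj j) p)) =
      if k = k' ∧ l = l' then 1 else 0 := by
  rw [NjR_G_eq]
  have hδ1 : ((2:ℝ)^j)⁻¹ ≤ 1 := by
    rw [inv_le_one_iff₀]
    right
    calc (1:ℝ) = (2:ℝ)^(0:ℤ) := by norm_num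
      _ ≤ (2:ℝ)^j := by
        apply zpow_le_zpow_right₀ (by norm_num) hj
  have hsep : ∀ u v : ℤ, u ≠ v → min (u:ℝ) (v:ℝ) + ((2:ℝ)^j)⁻¹ ≤ max (u:ℝ) (v:ℝ) := by
    intro u v huv
    have h1 : (1:ℝ) ≤ |(u:ℝ) - (v:ℝ)| := by
      have : (1:ℤ) ≤ |u - v| := Int.one_le_abs (sub_ne_zero.2 huv)
      calc (1:ℝ) ≤ ((|u - v| : ℤ):ℝ) := by exact_mod_cast this
        _ = |(u:ℝ) - (v:ℝ)| := by push_cast; ring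
    have h2 : max (u:ℝ) (v:ℝ) - min (u:ℝ) (v:ℝ) = |(v:ℝ) - (u:ℝ)| := max_sub_min_eq_abs _ _
    rw [abs_sub_comm] at h2
    linarith
  by_cases h : k = k' ∧ l = l'
  · obtain ⟨rfl, rfl⟩ := h
    rw [if_pos ⟨rfl, rfl⟩]
    simp only [sub_self]
    rw [NjR_gf_diag2, NjR_gf_diag2, mul_one]
  · rw [if_neg h]
    rcases (not_and_or.1 h) with hk | hl
    · rw [NjR_gf_empty2 j (l - l') k k' (hsep k k' hk), zero_mul]
    · rw [NjR_gf_empty2 j (k' - k) l l' (hsep l l' hl), mul_zero]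

lemma NjR_J_eq (m : ℤ) (hm : m ≠ 0) (lo hi : ℝ) (h : lo ≤ hi) :
    ∫ x in Set.Ico lo hi, Complex.exp (Real.pi * Complex.I * m * x)
      = (Complex.exp (Real.pi*Complex.I*m*hi) - Complex.exp (Real.pi*Complex.I*m*lo))
          / (Real.pi*Complex.I*m) := by
  have hc : (Real.pi : ℂ) * Complex.I * (m:ℂ) ≠ 0 := by
    refine mul_ne_zero (mul_ne_zero ?_ Complex.I_ne_zero) ?_
    · exact_mod_cast Real.pi_ne_zero
    · exact_mod_cast hm
  rw [MeasureTheory.integral_Ico_eq_integral_Ioo, ← MeasureTheory.integral_Ioc_eq_integral_Ioo,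
    ← intervalIntegral.integral_of_le h]
  simpa using integral_exp_mul_complex hc (a := lo) (b := hi)

lemma NjR_exp_norm (m : ℤ) (x : ℝ) : ‖Complex.exp (Real.pi * Complex.I * m * x)‖ = 1 := by
  have : (Real.pi : ℂ) * Complex.I * m * x = ((Real.pi * m * x : ℝ) : ℂ) * Complex.I := by
    push_cast; ring
  rw [this]
  exact Complex.norm_exp_ofReal_mul_I _

lemma NjR_gf_empty (j m u v : ℤ)
    (h : min (u:ℝ) (v:ℝ) + ((2:ℝ)^j)⁻¹ ≤ max (u:ℝ) (v:ℝ)) :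
    ∫ x, NjRgf j m u v x = 0 := by
  rw [NjR_gf_int2, Set.Ico_eq_empty (not_lt.2 h)]
  simp

lemma NjR_gf_diag (j u : ℤ) : ∫ x, NjRgf j 0 u u x = 1 := by
  rw [NjR_gf_int2]
  have h2 : (0:ℝ) < (2:ℝ)^j := by positivity
  have : ∀ x : ℝ, Complex.exp (Real.pi * Complex.I * ((0:ℤ):ℂ) * x) = 1 := by
    intro x; simp
  simp only [this]
  rw [MeasureTheory.setIntegral_const]
  simp only [max_self, min_self, Real.volume_Ico, add_sub_cancel_left,
    ENNReal.toReal_ofReal (le_of_lt (inv_pos.2 h2))]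
  rw [Complex.real_smul, mul_one, ← Complex.ofReal_mul,
    Real.volume_real_Ico_of_le (le_add_of_nonneg_right (le_of_lt (inv_pos.2 h2))),
    add_sub_cancel_left, mul_inv_cancel₀ (ne_of_gt h2)]
  simp

lemma NjR_gf_bound (j m u v : ℤ) (hm : m ≠ 0) :
    ‖∫ x, NjRgf j m u v x‖ ≤ (2:ℝ)^j * (2 / Real.pi) := by
  rw [NjR_gf_int2]
  set lo := max (u:ℝ) (v:ℝ)
  set hi := min (u:ℝ) (v:ℝ) + ((2:ℝ)^j)⁻¹
  have h2 : (0:ℝ) < (2:ℝ)^j := by positivity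
  rw [norm_mul]
  have hnc : ‖(((2:ℝ)^j : ℝ) : ℂ)‖ = (2:ℝ)^j := by
    rw [Complex.norm_real, Real.norm_eq_abs, abs_of_pos h2]
  rw [hnc]
  apply mul_le_mul_of_nonneg_left _ (le_of_lt h2)
  by_cases h : lo ≤ hi
  · rw [NjR_J_eq m hm lo hi h]
    rw [norm_div]
    have hub : ‖Complex.exp (Real.pi*Complex.I*m*hi) - Complex.exp (Real.pi*Complex.I*m*lo)‖ ≤ 2 := by
      refine le_trans (norm_sub_le _ _) ?_
      rw [NjR_exp_norm, NjR_exp_norm]; norm_num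
    have hden : ‖(Real.pi : ℂ) * Complex.I * m‖ = Real.pi * |(m:ℝ)| := by
      simp [norm_mul, Complex.norm_real, Real.norm_eq_abs, abs_of_pos Real.pi_pos,
        Complex.norm_intCast]
    rw [hden]
    have hm1 : (1:ℝ) ≤ |(m:ℝ)| := by
      have : (1:ℤ) ≤ |m| := Int.one_le_abs hm
      calc (1:ℝ) ≤ ((|m| : ℤ) : ℝ) := by exact_mod_cast this
        _ = |(m:ℝ)| := by push_cast; ring
    have hpi : (0:ℝ) < Real.pi := Real.pi_pos
    rw [div_le_div_iff₀ (by positivity) hpi]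
    calc ‖Complex.exp (Real.pi*Complex.I*m*hi) - Complex.exp (Real.pi*Complex.I*m*lo)‖ * Real.pi
        ≤ 2 * Real.pi := by nlinarith
      _ ≤ 2 * (Real.pi * |(m:ℝ)|) := by nlinarith
  · rw [Set.Ico_eq_empty (fun hlt => h (le_of_lt hlt))]
    simp
    positivity

lemma NjR_gf_zero (j m u v M : ℤ) (hM0 : 0 < M) (hδ : ((2:ℝ)^j)⁻¹ = (M:ℝ)) (hm : m ≠ 0)
    (hev : (m * (M - |u - v|)) % 2 = 0) : ∫ x, NjRgf j m u v x = 0 := by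
  by_cases h : |u - v| < M
  · set lo : ℝ := max (u:ℝ) (v:ℝ) with hlo
    set hi : ℝ := min (u:ℝ) (v:ℝ) + ((2:ℝ)^j)⁻¹ with hhi0
    obtain ⟨t, ht⟩ : ∃ t : ℤ, m * (M - |u - v|) = 2 * t := ⟨(m*(M - |u - v|))/2, by omega⟩
    have hmaxmin : lo - (min (u:ℝ) (v:ℝ)) = ((|u - v| : ℤ) : ℝ) := by
      rw [hlo, max_sub_min_eq_abs]
      push_cast [abs_sub_comm (u:ℝ) (v:ℝ)]
      ring
    have hLr : ((M - |u - v| : ℤ):ℝ) = (M:ℝ) - ((|u - v| : ℤ) : ℝ) := by push_cast; ring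
    have hhi : hi = lo + ((M - |u - v| : ℤ):ℝ) := by rw [hhi0, hδ]; linarith
    have hle : lo ≤ hi := by
      have : (0:ℝ) ≤ ((M - |u - v| : ℤ):ℝ) := by exact_mod_cast (by omega : (0:ℤ) ≤ M - |u - v|)
      rw [hhi]; linarith
    rw [NjR_gf_int2, NjR_J_eq m hm lo hi hle]
    have hexp : Complex.exp (Real.pi*Complex.I*m*hi) = Complex.exp (Real.pi*Complex.I*m*lo) := by
      rw [show (Real.pi:ℂ)*Complex.I*(m:ℂ)*(hi:ℂ)
          = Real.pi*Complex.I*m*(lo:ℂ) + (t:ℂ) * (2*Real.pi*Complex.I) by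
        rw [hhi]
        push_cast
        have hml : (m:ℂ) * (((M - |u - v| : ℤ):ℝ):ℂ) = 2*(t:ℂ) := by exact_mod_cast ht
        have hC : (((M - |u - v| : ℤ):ℝ):ℂ) = (M:ℂ) - ((|(u:ℝ) - (v:ℝ)| : ℝ):ℂ) := by
          push_cast; ring
        linear_combination (Real.pi:ℂ) * Complex.I * hml - (Real.pi:ℂ) * Complex.I * (m:ℂ) * hC]
      rw [Complex.exp_add, Complex.exp_int_mul_two_pi_mul_I, mul_one]
    rw [hexp]
    simp
  · apply NjR_gf_empty
    have h1 : max (u:ℝ) (v:ℝ) - min (u:ℝ) (v:ℝ) = ((|u - v| : ℤ) : ℝ) := by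
      rw [max_sub_min_eq_abs]
      push_cast [abs_sub_comm (u:ℝ) (v:ℝ)]
      ring
    have h2 : (M:ℝ) ≤ ((|u - v| : ℤ) : ℝ) := by exact_mod_cast (by omega : M ≤ |u - v|)
    rw [hδ]; linarith

lemma NjR_gf_conj (j m u v : ℤ) (x : ℝ) :
    (starRingEnd ℂ) (NjRgf j m u v x) = NjRgf j (-m) v u x := by
  have h1 : (starRingEnd ℂ) (Real.pi * Complex.I * (m:ℂ) * (x:ℝ) : ℂ)
      = Real.pi * Complex.I * ((-m : ℤ):ℂ) * (x:ℝ) := by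
    simp only [map_mul, Complex.conj_I, Complex.conj_ofReal, map_intCast]
    push_cast; ring
  simp only [NjRgf, map_mul]
  rw [← Complex.exp_conj, h1]
  rw [max_comm (v:ℝ) u, min_comm (v:ℝ) u]
  congr 1
  · congr 1
    exact Complex.conj_ofReal _
  · split <;> simp

noncomputable def NjRG (j : ℤ) (p q : ℤ × ℤ) : ℂ :=
  (∫ x, NjRgf j (p.2 - q.2) p.1 q.1 x) * (∫ y, NjRgf j (q.1 - p.1) p.2 q.2 y)

lemma NjRG_int (j : ℤ) (p q : ℤ × ℤ) :
    ∫ z : ℝ×ℝ, NjRgf j (p.2 - q.2) p.1 q.1 z.1 * NjRgf j (q.1 - p.1) p.2 q.2 z.2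
      = NjRG j p q := by
  rw [NjRG, MeasureTheory.Measure.volume_eq_prod, MeasureTheory.integral_prod_mul]

lemma NjRG_diag (j : ℤ) (p : ℤ × ℤ) : NjRG j p p = 1 := by
  simp [NjRG, sub_self, NjR_gf_diag2]

lemma NjRG_conj (j : ℤ) (p q : ℤ × ℤ) : NjRG j q p = (starRingEnd ℂ) (NjRG j p q) := by
  have h1 : ∀ m u v : ℤ, (starRingEnd ℂ) (∫ x, NjRgf j m u v x) = ∫ x, NjRgf j (-m) v u x := by
    intro m u v
    have h := integral_conj (μ := (volume : Measure ℝ)) (f := NjRgf j m u v)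
    rw [← h]
    congr 1
    funext x
    exact NjR_gf_conj j m u v x
  rw [NjRG, NjRG, map_mul, h1, h1, neg_sub, neg_sub]

lemma NjRG_norm_symm (j : ℤ) (p q : ℤ × ℤ) : ‖NjRG j p q‖ = ‖NjRG j q p‖ := by
  rw [NjRG_conj, starRingEnd_apply, norm_star]

lemma NjRG_bound (j M : ℤ) (hM0 : 0 < M) (hδ : ((2:ℝ)^j)⁻¹ = (M:ℝ)) (p q : ℤ × ℤ)
    (hodd1 : (p.1 - q.1) % 2 = 1) (hodd2 : (p.2 - q.2) % 2 = 1) :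
    ‖NjRG j p q‖ ≤ ((M:ℝ)⁻¹ * (2 / Real.pi))^2 := by
  have hMR : (0:ℝ) < (M:ℝ) := by exact_mod_cast hM0
  have h2j : (2:ℝ)^j = (M:ℝ)⁻¹ := by rw [← hδ, inv_inv]
  have hb1 := NjR_gf_bound j (p.2 - q.2) p.1 q.1 (by omega)
  have hb2 := NjR_gf_bound j (q.1 - p.1) p.2 q.2 (by omega)
  rw [h2j] at hb1 hb2
  rw [NjRG, norm_mul, sq]
  have h0 : (0:ℝ) ≤ (M:ℝ)⁻¹ * (2 / Real.pi) := by positivity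
  exact mul_le_mul hb1 hb2 (norm_nonneg _) h0

lemma NjR_even_mul (a b : ℤ) (hb : b % 2 = 0) : (a * b) % 2 = 0 := by
  obtain ⟨t, rfl⟩ : ∃ t, b = 2 * t := ⟨b / 2, by omega⟩
  rw [show a * (2 * t) = 2 * (a * t) by ring]
  omega

lemma NjR_even_mul' (a b : ℤ) (ha : a % 2 = 0) : (a * b) % 2 = 0 := by
  rw [mul_comm]; exact NjR_even_mul b a ha

lemma NjRG_zero (j M : ℤ) (hM0 : 0 < M) (hMe : M % 2 = 0) (hδ : ((2:ℝ)^j)⁻¹ = (M:ℝ))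
    (p q : ℤ × ℤ) (hne : q ≠ p)
    (hnc : ¬((p.1 - q.1) % 2 = 1 ∧ (p.2 - q.2) % 2 = 1 ∧
        -M < p.1 - q.1 ∧ p.1 - q.1 < M ∧ -M < p.2 - q.2 ∧ p.2 - q.2 < M)) :
    NjRG j p q = 0 := by
  have hemp : ∀ u v : ℤ, M ≤ |u - v| →
      min (u:ℝ) (v:ℝ) + ((2:ℝ)^j)⁻¹ ≤ max (u:ℝ) (v:ℝ) := by
    intro u v huv
    have h2 : max (u:ℝ) (v:ℝ) - min (u:ℝ) (v:ℝ) = |(u:ℝ) - (v:ℝ)| := by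
      rw [max_sub_min_eq_abs, abs_sub_comm]
    have h3 : (M:ℝ) ≤ |(u:ℝ) - (v:ℝ)| := by
      calc (M:ℝ) ≤ ((|u - v| : ℤ):ℝ) := by exact_mod_cast huv
        _ = |(u:ℝ) - (v:ℝ)| := by push_cast; ring
    rw [hδ]; linarith
  have hd : p.1 - q.1 ≠ 0 ∨ p.2 - q.2 ≠ 0 := by
    by_contra hcon
    push_neg at hcon
    exact hne (Prod.ext (by omega) (by omega)).symm
  by_cases hC1 : M ≤ |p.1 - q.1|
  · rw [NjRG, NjR_gf_empty2 j _ p.1 q.1 (hemp _ _ hC1), zero_mul]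
  · by_cases hC2 : M ≤ |p.2 - q.2|
    · rw [NjRG, NjR_gf_empty2 j _ p.2 q.2 (hemp _ _ hC2), mul_zero]
    · by_cases hdl : p.2 - q.2 = 0
      · rw [NjRG, NjR_gf_zero j (q.1 - p.1) p.2 q.2 M hM0 hδ (by omega)
          (NjR_even_mul _ _ (by rw [hdl, abs_zero]; omega)), mul_zero]
      · have hpar : (p.2 - q.2) % 2 = 0 ∨ (M - |p.1 - q.1|) % 2 = 0 := by
          rcases abs_cases (p.1 - q.1) with ⟨h1, _⟩ | ⟨h1, _⟩ <;>
            rcases abs_cases (p.2 - q.2) with ⟨h2, _⟩ | ⟨h2, _⟩ <;> omega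
        rcases hpar with hp1 | hp1
        · rw [NjRG, NjR_gf_zero j (p.2 - q.2) p.1 q.1 M hM0 hδ hdl
            (NjR_even_mul' _ _ hp1), zero_mul]
        · rw [NjRG, NjR_gf_zero j (p.2 - q.2) p.1 q.1 M hM0 hδ hdl
            (NjR_even_mul _ _ hp1), zero_mul]

def NjRcond (M : ℤ) (p q : ℤ × ℤ) : Prop :=
  (p.1 - q.1) % 2 = 1 ∧ (p.2 - q.2) % 2 = 1 ∧
    -M < p.1 - q.1 ∧ p.1 - q.1 < M ∧ -M < p.2 - q.2 ∧ p.2 - q.2 < M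

instance (M : ℤ) (p q : ℤ × ℤ) : Decidable (NjRcond M p q) := by
  unfold NjRcond; infer_instance

lemma NjR_row (j M : ℤ) (hM0 : 0 < M) (hMe : M % 2 = 0) (hδ : ((2:ℝ)^j)⁻¹ = (M:ℝ))
    (s : Finset (ℤ × ℤ)) (p : ℤ × ℤ) :
    ∑ q ∈ s, (if q = p then (0:ℝ) else ‖NjRG j p q‖) ≤ 4 / Real.pi ^ 2 := by
  have hBnn : (0:ℝ) ≤ ((M:ℝ)⁻¹ * (2 / Real.pi))^2 := by positivity
  have hterm : ∀ q ∈ s, (if q = p then (0:ℝ) else ‖NjRG j p q‖) ≤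
      (if NjRcond M p q then ((M:ℝ)⁻¹ * (2 / Real.pi))^2 else 0) := by
    intro q _
    by_cases hqp : q = p
    · rw [if_pos hqp]
      split <;> simp [hBnn]
    · rw [if_neg hqp]
      by_cases hc : NjRcond M p q
      · rw [if_pos hc]
        exact NjRG_bound j M hM0 hδ p q hc.1 hc.2.1
      · rw [if_neg hc, NjRG_zero j M hM0 hMe hδ p q hqp (by rw [NjRcond] at hc; exact hc),
          norm_zero]
  have hsub : s.filter (NjRcond M p) ⊆ Finset.image
      (fun t : ℕ×ℕ => ((p.1 - M + 1 + 2*(t.1:ℤ), p.2 - M + 1 + 2*(t.2:ℤ)) : ℤ × ℤ))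
      (Finset.range M.toNat ×ˢ Finset.range M.toNat) := by
    intro q hq
    rw [Finset.mem_filter] at hq
    obtain ⟨-, hc⟩ := hq
    rw [NjRcond] at hc
    rw [Finset.mem_image]
    refine ⟨(((q.1 - p.1 + M - 1)/2).toNat, ((q.2 - p.2 + M - 1)/2).toNat), ?_, ?_⟩
    · rw [Finset.mem_product, Finset.mem_range, Finset.mem_range]
      constructor <;> omega
    · rw [Prod.ext_iff]
      constructor <;> simp <;> omega
  have hcard : (s.filter (NjRcond M p)).card ≤ M.toNat * M.toNat := by
    refine le_trans (Finset.card_le_card hsub) (le_trans Finset.card_image_le ?_)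
    simp [Finset.card_product]
  have hMne : (M:ℝ) ≠ 0 := by
    have : (0:ℝ) < (M:ℝ) := by exact_mod_cast hM0
    linarith
  calc ∑ q ∈ s, (if q = p then (0:ℝ) else ‖NjRG j p q‖)
      ≤ ∑ q ∈ s, (if NjRcond M p q then ((M:ℝ)⁻¹ * (2 / Real.pi))^2 else 0) :=
        Finset.sum_le_sum hterm
    _ = ∑ q ∈ s.filter (NjRcond M p), ((M:ℝ)⁻¹ * (2 / Real.pi))^2 :=
        (Finset.sum_filter _ _).symm
    _ = (s.filter (NjRcond M p)).card • ((M:ℝ)⁻¹ * (2 / Real.pi))^2 := Finset.sum_const _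
    _ ≤ (M.toNat * M.toNat) • ((M:ℝ)⁻¹ * (2 / Real.pi))^2 := by
        rw [nsmul_eq_mul, nsmul_eq_mul]
        apply mul_le_mul_of_nonneg_right _ hBnn
        exact_mod_cast hcard
    _ = 4 / Real.pi ^ 2 := by
        rw [nsmul_eq_mul]
        have hMt : ((M.toNat : ℕ) : ℝ) = (M:ℝ) := by
          exact_mod_cast congrArg (fun x : ℤ => (x:ℝ)) (Int.toNat_of_nonneg (le_of_lt hM0))
        push_cast
        rw [hMt]
        field_simp
        ring

lemma NjR_expand (j : ℤ) (s : Finset (ℤ × ℤ)) (c : ℤ × ℤ → ℂ) :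
    ∫ z : ℝ × ℝ, ‖∑ p ∈ s, c p * tT p.1 p.2 (Nj j) z‖ ^ 2
      = (∑ p ∈ s, ∑ q ∈ s, (c p * (starRingEnd ℂ) (c q)) * NjRG j p q).re := by
  have h2 : ∀ z : ℝ × ℝ, (∑ p ∈ s, c p * tT p.1 p.2 (Nj j) z) *
      (starRingEnd ℂ) (∑ p ∈ s, c p * tT p.1 p.2 (Nj j) z) = ∑ p ∈ s, ∑ q ∈ s,
      (c p * (starRingEnd ℂ) (c q)) *
        (NjRgf j (p.2 - q.2) p.1 q.1 z.1 * NjRgf j (q.1 - p.1) p.2 q.2 z.2) := by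
    intro z
    rw [map_sum, Finset.sum_mul_sum]
    refine Finset.sum_congr rfl fun p _ => Finset.sum_congr rfl fun q _ => ?_
    rw [map_mul]
    calc c p * tT p.1 p.2 (Nj j) z *
          ((starRingEnd ℂ) (c q) * (starRingEnd ℂ) (tT q.1 q.2 (Nj j) z))
        = (c p * (starRingEnd ℂ) (c q)) *
          (tT p.1 p.2 (Nj j) z * (starRingEnd ℂ) (tT q.1 q.2 (Nj j) z)) := by ring
      _ = _ := by rw [NjR_prod]
  have hInt : Integrable (fun z : ℝ × ℝ => (∑ p ∈ s, c p * tT p.1 p.2 (Nj j) z) *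
      (starRingEnd ℂ) (∑ p ∈ s, c p * tT p.1 p.2 (Nj j) z)) := by
    rw [funext h2]
    apply MeasureTheory.integrable_finset_sum
    intro p _
    apply MeasureTheory.integrable_finset_sum
    intro q _
    exact (NjR_prod_integrable j _ _ _ _ _ _).const_mul _
  have hsum : ∫ z : ℝ × ℝ, (∑ p ∈ s, c p * tT p.1 p.2 (Nj j) z) *
      (starRingEnd ℂ) (∑ p ∈ s, c p * tT p.1 p.2 (Nj j) z)
      = ∑ p ∈ s, ∑ q ∈ s, (c p * (starRingEnd ℂ) (c q)) * NjRG j p q := by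
    rw [funext h2]
    rw [MeasureTheory.integral_finset_sum _ (fun p _ =>
      MeasureTheory.integrable_finset_sum _ (fun q _ =>
        (NjR_prod_integrable j _ _ _ _ _ _).const_mul _))]
    refine Finset.sum_congr rfl fun p _ => ?_
    rw [MeasureTheory.integral_finset_sum _ (fun q _ =>
      (NjR_prod_integrable j _ _ _ _ _ _).const_mul _)]
    refine Finset.sum_congr rfl fun q _ => ?_
    rw [MeasureTheory.integral_const_mul, NjRG_int]
  have hre : (fun z : ℝ × ℝ => (‖∑ p ∈ s, c p * tT p.1 p.2 (Nj j) z‖ ^ 2 : ℝ))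
      = fun z => ((∑ p ∈ s, c p * tT p.1 p.2 (Nj j) z) *
        (starRingEnd ℂ) (∑ p ∈ s, c p * tT p.1 p.2 (Nj j) z)).re := by
    funext z
    rw [Complex.mul_conj, Complex.ofReal_re, Complex.normSq_eq_norm_sq]
  rw [hre, ← hsum]
  exact integral_re hInt

lemma NjR_Ebound (j M : ℤ) (hM0 : 0 < M) (hMe : M % 2 = 0) (hδ : ((2:ℝ)^j)⁻¹ = (M:ℝ))
    (s : Finset (ℤ × ℤ)) (c : ℤ × ℤ → ℂ) :
    |(∑ p ∈ s, ∑ q ∈ s.erase p, (c p * (starRingEnd ℂ) (c q)) * NjRG j p q).re|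
      ≤ (4 / Real.pi ^ 2) * ∑ p ∈ s, ‖c p‖ ^ 2 := by
  classical
  have hDnn : ∀ p q : ℤ × ℤ, (0:ℝ) ≤ (if q = p then 0 else ‖NjRG j p q‖) := by
    intro p q; split
    · exact le_refl 0
    · exact norm_nonneg _
  have hcol : ∀ q, ∑ p ∈ s, (if q = p then (0:ℝ) else ‖NjRG j p q‖) ≤ 4 / Real.pi ^ 2 := by
    intro q
    have hc : ∀ p ∈ s, (if q = p then (0:ℝ) else ‖NjRG j p q‖)
        = (if p = q then (0:ℝ) else ‖NjRG j q p‖) := by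
      intro p _
      by_cases h : p = q
      · simp [h]
      · rw [if_neg h, if_neg (Ne.symm h), NjRG_norm_symm]
    rw [Finset.sum_congr rfl hc]
    exact NjR_row j M hM0 hMe hδ s q
  have hrow : ∀ p, ∑ q ∈ s, (if q = p then (0:ℝ) else ‖NjRG j p q‖) ≤ 4 / Real.pi ^ 2 :=
    fun p => NjR_row j M hM0 hMe hδ s p
  calc |(∑ p ∈ s, ∑ q ∈ s.erase p, (c p * (starRingEnd ℂ) (c q)) * NjRG j p q).re|
      ≤ ‖∑ p ∈ s, ∑ q ∈ s.erase p, (c p * (starRingEnd ℂ) (c q)) * NjRG j p q‖ :=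
        Complex.abs_re_le_norm _
    _ ≤ ∑ p ∈ s, ‖∑ q ∈ s.erase p, (c p * (starRingEnd ℂ) (c q)) * NjRG j p q‖ :=
        norm_sum_le _ _
    _ ≤ ∑ p ∈ s, ∑ q ∈ s.erase p, ‖c p‖ * ‖c q‖ * ‖NjRG j p q‖ := by
        refine Finset.sum_le_sum fun p _ => le_trans (norm_sum_le _ _)
          (Finset.sum_le_sum fun q _ => le_of_eq ?_)
        rw [norm_mul, norm_mul, starRingEnd_apply, norm_star]
    _ = ∑ p ∈ s, ∑ q ∈ s, ‖c p‖ * ‖c q‖ * (if q = p then 0 else ‖NjRG j p q‖) := by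
        refine Finset.sum_congr rfl fun p _ => ?_
        rw [← Finset.sum_erase s
          (show ‖c p‖ * ‖c p‖ * (if p = p then (0:ℝ) else ‖NjRG j p p‖) = 0 by simp)]
        refine Finset.sum_congr rfl fun q hq => ?_
        rw [if_neg (Finset.ne_of_mem_erase hq)]
    _ ≤ ∑ p ∈ s, ∑ q ∈ s, (‖c p‖^2/2 + ‖c q‖^2/2) * (if q = p then 0 else ‖NjRG j p q‖) := by
        refine Finset.sum_le_sum fun p _ => Finset.sum_le_sum fun q _ => ?_
        apply mul_le_mul_of_nonneg_right _ (hDnn p q)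
        nlinarith [sq_nonneg (‖c p‖ - ‖c q‖), norm_nonneg (c p), norm_nonneg (c q)]
    _ = (∑ p ∈ s, ∑ q ∈ s, (‖c p‖^2/2) * (if q = p then 0 else ‖NjRG j p q‖))
        + ∑ p ∈ s, ∑ q ∈ s, (‖c q‖^2/2) * (if q = p then 0 else ‖NjRG j p q‖) := by
        rw [← Finset.sum_add_distrib]
        refine Finset.sum_congr rfl fun p _ => ?_
        rw [← Finset.sum_add_distrib]
        refine Finset.sum_congr rfl fun q _ => ?_
        ring
    _ ≤ (4 / Real.pi ^ 2) * ∑ p ∈ s, ‖c p‖ ^ 2 := by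
        have h1 : (∑ p ∈ s, ∑ q ∈ s, (‖c p‖^2/2) * (if q = p then 0 else ‖NjRG j p q‖))
            ≤ ∑ p ∈ s, (‖c p‖^2/2) * (4 / Real.pi ^ 2) := by
          refine Finset.sum_le_sum fun p _ => ?_
          rw [← Finset.mul_sum]
          exact mul_le_mul_of_nonneg_left (hrow p) (by positivity)
        have h2 : (∑ p ∈ s, ∑ q ∈ s, (‖c q‖^2/2) * (if q = p then 0 else ‖NjRG j p q‖))
            ≤ ∑ q ∈ s, (‖c q‖^2/2) * (4 / Real.pi ^ 2) := by
          rw [Finset.sum_comm]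
          refine Finset.sum_le_sum fun q _ => ?_
          rw [← Finset.mul_sum]
          exact mul_le_mul_of_nonneg_left (hcol q) (by positivity)
        have h3 : (∑ p ∈ s, (‖c p‖^2/2) * (4 / Real.pi ^ 2))
            + (∑ q ∈ s, (‖c q‖^2/2) * (4 / Real.pi ^ 2))
            = (4 / Real.pi ^ 2) * ∑ p ∈ s, ‖c p‖ ^ 2 := by
          rw [← Finset.sum_add_distrib, Finset.mul_sum]
          refine Finset.sum_congr rfl fun p _ => ?_
          ring
        linarith

lemma NjR_split (j : ℤ) (s : Finset (ℤ × ℤ)) (c : ℤ × ℤ → ℂ) :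
    ∑ p ∈ s, ∑ q ∈ s, (c p * (starRingEnd ℂ) (c q)) * NjRG j p q
      = ((∑ p ∈ s, ‖c p‖ ^ 2 : ℝ) : ℂ)
        + ∑ p ∈ s, ∑ q ∈ s.erase p, (c p * (starRingEnd ℂ) (c q)) * NjRG j p q := by
  classical
  calc ∑ p ∈ s, ∑ q ∈ s, (c p * (starRingEnd ℂ) (c q)) * NjRG j p q
      = ∑ p ∈ s, ((c p * (starRingEnd ℂ) (c p)) * NjRG j p p
          + ∑ q ∈ s.erase p, (c p * (starRingEnd ℂ) (c q)) * NjRG j p q) :=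
        Finset.sum_congr rfl fun p hp =>
          (Finset.add_sum_erase s (fun q => (c p * (starRingEnd ℂ) (c q)) * NjRG j p q) hp).symm
    _ = (∑ p ∈ s, (c p * (starRingEnd ℂ) (c p)) * NjRG j p p)
        + ∑ p ∈ s, ∑ q ∈ s.erase p, (c p * (starRingEnd ℂ) (c q)) * NjRG j p q :=
        Finset.sum_add_distrib
    _ = _ := by
        congr 1
        have h : ∀ p ∈ s, (c p * (starRingEnd ℂ) (c p)) * NjRG j p p = ((‖c p‖^2 : ℝ) : ℂ) := by
          intro p _
          rw [NjRG_diag, mul_one, Complex.mul_conj, Complex.normSq_eq_norm_sq]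
        rw [Finset.sum_congr rfl h, Complex.ofReal_sum]

theorem Nj_riesz (j : ℤ) :
    (j < 0 → ∀ (s : Finset (ℤ × ℤ)) (c : ℤ × ℤ → ℂ),
      (1 - 2 / Real.pi) * ∑ p ∈ s, ‖c p‖ ^ 2 ≤
          (∫ z : ℝ × ℝ, ‖∑ p ∈ s, c p * tT p.1 p.2 (Nj j) z‖ ^ 2) ∧
      (∫ z : ℝ × ℝ, ‖∑ p ∈ s, c p * tT p.1 p.2 (Nj j) z‖ ^ 2) ≤
        (1 + 2 / Real.pi) * ∑ p ∈ s, ‖c p‖ ^ 2) ∧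
    (0 ≤ j → ∀ k l k' l' : ℤ,
      (∫ p : ℝ × ℝ, tT k l (Nj j) p * (starRingEnd ℂ) (tT k' l' (Nj j) p)) =
        if k = k' ∧ l = l' then 1 else 0) := by
  refine ⟨fun hj s c => ?_, fun hj k l k' l' => NjR_part2 j hj k l k' l'⟩
  classical
  set n : ℕ := (-j).toNat with hn
  have hn1 : 1 ≤ n := by omega
  set M : ℤ := 2 ^ n with hM
  have hM0 : 0 < M := by positivity
  have hMe : M % 2 = 0 := by
    have h : M = 2 * 2 ^ (n - 1) := by
      rw [hM, ← pow_succ']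
      congr 1
      omega
    omega
  have hδ : ((2:ℝ)^j)⁻¹ = (M:ℝ) := by
    rw [← zpow_neg]
    have hj' : -j = (n:ℤ) := by omega
    rw [hj', zpow_natCast, hM]
    push_cast
    ring
  have hE := NjR_Ebound j M hM0 hMe hδ s c
  have hS : (0:ℝ) ≤ ∑ p ∈ s, ‖c p‖ ^ 2 :=
    Finset.sum_nonneg fun p _ => by positivity
  have hpi2 : (2:ℝ) ≤ Real.pi := le_of_lt (lt_trans (by norm_num) Real.pi_gt_three)
  have hpipos : (0:ℝ) < Real.pi := Real.pi_pos
  have hcmp : 4 / Real.pi ^ 2 ≤ 2 / Real.pi := by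
    rw [div_le_div_iff₀ (by positivity) hpipos]
    nlinarith
  have hE' : |(∑ p ∈ s, ∑ q ∈ s.erase p, (c p * (starRingEnd ℂ) (c q)) * NjRG j p q).re|
      ≤ (2 / Real.pi) * ∑ p ∈ s, ‖c p‖ ^ 2 :=
    le_trans hE (mul_le_mul_of_nonneg_right hcmp hS)
  obtain ⟨hE1, hE2⟩ := abs_le.1 hE'
  constructor
  · rw [NjR_expand j s c, NjR_split j s c, Complex.add_re, Complex.ofReal_re]
    linarith
  · rw [NjR_expand j s c, NjR_split j s c, Complex.add_re, Complex.ofReal_re]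
    linarith
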